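/- Let G and H be finite abelian groups. If for every t ∈ ℕ the number of elements of order t in G equals the number of elements of order t in H, then G and H are isomorphic. -/

import Mathlib

open Finset Nat

private lemma rc_eq_sum (α : Type*) [Group α] [Finite α] {n : ℕ} (hn : n ≠ 0) :
    Nat.card {x : α // x ^ n = 1} = ∑ t ∈ n.divisors, Nat.card {x : α // orderOf x = t} := by
  classical
  cases nonempty_fintype α
  have e : {x : α // x ^ n = 1} ≃ (Σ t : n.divisors, {x : α // orderOf x = t}) :=
    { toFun := fun x => ⟨⟨orderOf x.1,
        Nat.mem_divisors.mpr ⟨orderOf_dvd_of_pow_eq_one x.2, hn⟩⟩, ⟨x.1, rfl⟩⟩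
      invFun := fun y => ⟨y.2.1, orderOf_dvd_iff_pow_eq_one.mp
        (by rw [y.2.2]; exact (Nat.mem_divisors.mp y.1.2).1)⟩
      left_inv := fun _ => rfl
      right_inv := fun ⟨⟨t, ht⟩, ⟨x, hx⟩⟩ => by
        have hx' : orderOf x = t := hx
        subst hx'; rfl }
  rw [Nat.card_congr e, Nat.card_eq_fintype_card, Fintype.card_sigma,
    ← Finset.sum_coe_sort n.divisors (fun t => Nat.card {x : α // orderOf x = t})]
  exact Finset.sum_congr rfl fun t _ => (Nat.card_eq_fintype_card).symm

private lemma cyclic_rc (α : Type*) [Group α] [Fintype α] [IsCyclic α] {n : ℕ} (hn : n ≠ 0) :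
    Nat.card {x : α // x ^ n = 1} = Nat.gcd n (Fintype.card α) := by
  set d := Nat.gcd n (Fintype.card α) with hd
  have hd0 : d ≠ 0 := Nat.gcd_ne_zero_left hn
  have hdvd : d ∣ Fintype.card α := Nat.gcd_dvd_right _ _
  have e : {x : α // x ^ n = 1} ≃ {x : α // x ^ d = 1} := by
    apply Equiv.subtypeEquivRight
    intro x
    simp only [← orderOf_dvd_iff_pow_eq_one]
    exact ⟨fun hx => Nat.dvd_gcd hx orderOf_dvd_card,
      fun hx => hx.trans (Nat.gcd_dvd_left _ _)⟩
  rw [Nat.card_congr e, rc_eq_sum α hd0]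
  have : ∀ t ∈ d.divisors, Nat.card {x : α // orderOf x = t} = t.totient := by
    intro t ht
    have h2 := IsCyclic.card_orderOf_eq_totient (α := α)
      ((Nat.mem_divisors.mp ht).1.trans hdvd)
    rw [Nat.card_eq_fintype_card, Fintype.card_subtype, ← h2]
  rw [Finset.sum_congr rfl this, Nat.sum_totient]

private lemma rc_congr {α β : Type*} [Monoid α] [Monoid β] (e : α ≃* β) (n : ℕ) :
    Nat.card {x : α // x ^ n = 1} = Nat.card {y : β // y ^ n = 1} := by
  apply Nat.card_congr
  exact Equiv.subtypeEquiv e.toEquiv fun x => by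
    rw [show (e.toEquiv x) = e x from rfl, ← map_pow, EmbeddingLike.map_eq_one_iff]

private lemma rc_pi {ι : Type*} [Fintype ι] (M : ι → Type*) [∀ i, Monoid (M i)] (n : ℕ) :
    Nat.card {x : ∀ i, M i // x ^ n = 1} = ∏ i, Nat.card {y : M i // y ^ n = 1} := by
  rw [← Nat.card_pi]
  apply Nat.card_congr
  exact (Equiv.subtypeEquivRight fun x => by
    simp [funext_iff]).trans (Equiv.subtypePiEquivPi)

private lemma rc_zmod (m : ℕ) (hm : m ≠ 0) {n : ℕ} (hn : n ≠ 0) :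
    Nat.card {x : Multiplicative (ZMod m) // x ^ n = 1} = Nat.gcd n m := by
  haveI : NeZero m := ⟨hm⟩
  rw [cyclic_rc _ hn]
  congr 1
  simp [ZMod.card]

private lemma gcd_pp (P k e : ℕ) : Nat.gcd (P ^ k) (P ^ e) = P ^ min k e := by
  rcases le_total k e with h | h
  · rw [Nat.gcd_eq_left (pow_dvd_pow P h), Nat.min_eq_left h]
  · rw [Nat.gcd_eq_right (pow_dvd_pow P h), Nat.min_eq_right h]

private lemma minsum {ι : Type*} (s : Finset ι) (e : ι → ℕ) (k : ℕ)
    [DecidablePred fun i => k + 1 ≤ e i] :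
    ∑ i ∈ s, min (k+1) (e i) = ∑ i ∈ s, min k (e i) + #(s.filter fun i => k+1 ≤ e i) := by
  rw [card_filter, ← Finset.sum_add_distrib]
  exact Finset.sum_congr rfl fun i _ => by split_ifs with h <;> omega

private lemma splitcard {ι : Type*} [DecidableEq ι] (s : Finset ι) (e : ι → ℕ) (k : ℕ)
    [DecidablePred fun i => k + 1 ≤ e i] [DecidablePred fun i => e i = k + 1]
    [DecidablePred fun i => k + 2 ≤ e i] :
    #(s.filter fun i => k+1 ≤ e i)
      = #(s.filter fun i => e i = k+1) + #(s.filter fun i => k+2 ≤ e i) := by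
  rw [card_filter, card_filter, card_filter, ← Finset.sum_add_distrib]
  exact Finset.sum_congr rfl fun i _ => by split_ifs <;> omega

private lemma pairs_count_eq {ι ι' : Type} [Fintype ι] [Fintype ι']
    (p e : ι → ℕ) (p' e' : ι' → ℕ)
    (hp : ∀ i, (p i).Prime) (hp' : ∀ j, (p' j).Prime)
    (he : ∀ i, e i ≠ 0) (he' : ∀ j, e' j ≠ 0)
    (h : ∀ n : ℕ, n ≠ 0 → ∏ i, Nat.gcd n (p i ^ e i) = ∏ j, Nat.gcd n (p' j ^ e' j)) :
    ∀ v : ℕ × ℕ, Nat.card {i : ι // (p i, e i) = v} = Nat.card {j : ι' // (p' j, e' j) = v} := by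
  classical
  have step1 : ∀ P : ℕ, P.Prime → ∀ k : ℕ,
      ∑ i ∈ univ.filter (fun i => p i = P), min k (e i)
        = ∑ j ∈ univ.filter (fun j => p' j = P), min k (e' j) := by
    intro P hP k
    have hP0 : P ^ k ≠ 0 := pow_ne_zero _ hP.ne_zero
    have h1 := h (P ^ k) hP0
    have lhs : ∀ {κ : Type} [Fintype κ] (q f : κ → ℕ), (∀ i, (q i).Prime) →
        ∏ i, Nat.gcd (P ^ k) (q i ^ f i)
          = P ^ (∑ i ∈ univ.filter (fun i => q i = P), min k (f i)) := by
      intro κ _ q f hq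
      rw [← Finset.prod_filter_mul_prod_filter_not univ (fun i => q i = P)
        (fun i => Nat.gcd (P ^ k) (q i ^ f i))]
      have e1 : ∏ i ∈ univ.filter (fun i => q i = P), Nat.gcd (P ^ k) (q i ^ f i)
          = ∏ i ∈ univ.filter (fun i => q i = P), P ^ min k (f i) := by
        apply Finset.prod_congr rfl
        intro i hi
        rw [(Finset.mem_filter.mp hi).2, gcd_pp]
      have e2 : ∏ i ∈ univ.filter (fun i => ¬ q i = P), Nat.gcd (P ^ k) (q i ^ f i) = 1 := by
        apply Finset.prod_eq_one
        intro i hi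
        exact (Nat.Coprime.pow k (f i) ((Nat.coprime_primes hP (hq i)).mpr
          (Ne.symm (Finset.mem_filter.mp hi).2))).gcd_eq_one
      rw [e1, e2, mul_one, Finset.prod_pow_eq_pow_sum]
    rw [lhs p e hp, lhs p' e' hp'] at h1
    exact Nat.pow_right_injective hP.two_le h1
  have step2 : ∀ P : ℕ, P.Prime → ∀ k : ℕ,
      #(univ.filter fun i : ι => p i = P ∧ k+1 ≤ e i)
        = #(univ.filter fun j : ι' => p' j = P ∧ k+1 ≤ e' j) := by
    intro P hP k
    have a1 := minsum (univ.filter (fun i : ι => p i = P)) e k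
    have a2 := minsum (univ.filter (fun j : ι' => p' j = P)) e' k
    have s1 := step1 P hP k
    have s2 := step1 P hP (k+1)
    rw [Finset.filter_filter] at a1 a2
    omega
  have step3 : ∀ P : ℕ, P.Prime → ∀ k : ℕ,
      #(univ.filter fun i : ι => p i = P ∧ e i = k+1)
        = #(univ.filter fun j : ι' => p' j = P ∧ e' j = k+1) := by
    intro P hP k
    have b1 := splitcard (univ.filter (fun i : ι => p i = P)) e k
    have b2 := splitcard (univ.filter (fun j : ι' => p' j = P)) e' k
    simp only [Finset.filter_filter] at b1 b2
    have c1 := step2 P hP k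
    have c2 : #(univ.filter fun i : ι => p i = P ∧ k+2 ≤ e i)
        = #(univ.filter fun j : ι' => p' j = P ∧ k+2 ≤ e' j) := step2 P hP (k+1)
    omega
  rintro ⟨P, k⟩
  have conv : ∀ {κ : Type} [Fintype κ] (q f : κ → ℕ),
      Nat.card {i : κ // (q i, f i) = (P, k)}
        = #(univ.filter fun i : κ => q i = P ∧ f i = k) := by
    intro κ _ q f
    rw [Nat.card_eq_fintype_card, Fintype.card_subtype]
    congr 1
    apply Finset.filter_congr
    intro i _
    simp [Prod.ext_iff]
  rw [conv p e, conv p' e']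
  by_cases hP : P.Prime
  · rcases k with _ | k
    · have z1 : (univ.filter fun i : ι => p i = P ∧ e i = 0) = ∅ :=
        Finset.filter_false_of_mem fun i _ hi => he i hi.2
      have z2 : (univ.filter fun j : ι' => p' j = P ∧ e' j = 0) = ∅ :=
        Finset.filter_false_of_mem fun j _ hj => he' j hj.2
      rw [z1, z2]; rfl
    · exact step3 P hP k
  · have z1 : (univ.filter fun i : ι => p i = P ∧ e i = k) = ∅ :=
      Finset.filter_false_of_mem fun i _ hi => hP (hi.1 ▸ hp i)
    have z2 : (univ.filter fun j : ι' => p' j = P ∧ e' j = k) = ∅ :=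
      Finset.filter_false_of_mem fun j _ hj => hP (hj.1 ▸ hp' j)
    rw [z1, z2]; rfl

private def dropTrivial {ι : Type} (M : ι → Type) [∀ i, CommGroup (M i)]
    (pred : ι → Prop) [DecidablePred pred] (h : ∀ i, ¬ pred i → Subsingleton (M i)) :
    (∀ i, M i) ≃* (∀ i : {i // pred i}, M i.1) where
  toFun f i := f i.1
  invFun g i := if hh : pred i then g ⟨i, hh⟩ else 1
  left_inv f := funext fun i => by
    by_cases hh : pred i
    · simp [hh]
    · haveI := h i hh
      exact Subsingleton.elim _ _
  right_inv g := funext fun i => by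
    simp [i.2]
  map_mul' f g := rfl

private def myPiCongrLeft' {ι ι' : Type} (M : ι → Type) [∀ i, Mul (M i)] (σ : ι ≃ ι') :
    (∀ i, M i) ≃* (∀ i', M (σ.symm i')) :=
  { Equiv.piCongrLeft' M σ with map_mul' := fun _ _ => rfl }

private def castMulZMod {a b : ℕ} (h : a = b) :
    Multiplicative (ZMod a) ≃* Multiplicative (ZMod b) := by subst h; exact MulEquiv.refl _

private lemma structure_thm (G : Type*) [CommGroup G] [Finite G] :
    ∃ (ι : Type) (_ : Fintype ι) (p e : ι → ℕ), (∀ i, (p i).Prime) ∧ (∀ i, e i ≠ 0) ∧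
      Nonempty (G ≃* ∀ i, Multiplicative (ZMod (p i ^ e i))) := by
  classical
  obtain ⟨ι₀, hι₀, p, hp, e, ⟨f⟩⟩ := AddCommGroup.equiv_directSum_zmod_of_finite (Additive G)
  have eG : G ≃* ∀ i, Multiplicative (ZMod (p i ^ e i)) :=
    MulEquiv.toAdditive.symm <| f.trans <| (DirectSum.addEquivProd _).trans <|
      MulEquiv.toAdditiveRight <| MulEquiv.piMultiplicative _
  have hsub : ∀ i : ι₀, ¬ e i ≠ 0 → Subsingleton (Multiplicative (ZMod (p i ^ e i))) := by
    intro i hi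
    rw [not_not] at hi
    rw [hi, pow_zero]
    infer_instance
  refine ⟨{i // e i ≠ 0}, inferInstance, fun i => p i.1, fun i => e i.1,
    fun i => hp i.1, fun i => i.2, ⟨eG.trans (dropTrivial _ _ hsub)⟩⟩

private lemma equiv_of_fibers {ι ι' β : Type} [Fintype ι] [Fintype ι'] (f : ι → β) (g : ι' → β)
    (h : ∀ v, Nat.card {i // f i = v} = Nat.card {j // g j = v}) :
    ∃ σ : ι ≃ ι', ∀ i, g (σ i) = f i := by
  classical
  have fib : ∀ v, Nonempty ({i // f i = v} ≃ {j // g j = v}) := fun v =>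
    Finite.card_eq.mp (h v)
  refine ⟨(Equiv.sigmaFiberEquiv f).symm.trans
    ((Equiv.sigmaCongrRight fun v => (fib v).some).trans (Equiv.sigmaFiberEquiv g)), ?_⟩
  exact fun i => ((fib (f i)).some ⟨i, rfl⟩).2

/-- Finite abelian groups with the same number of elements of each order are
isomorphic. -/
theorem abelian_orderCount_iso (G : Type*) [CommGroup G] [Finite G]
    (H : Type*) [CommGroup H] [Finite H]
    (h : ∀ t : ℕ, Nat.card {g : G // orderOf g = t} = Nat.card {x : H // orderOf x = t}) :
    Nonempty (G ≃* H) := by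
  obtain ⟨ι, hι, p, e, hp, he, ⟨eG⟩⟩ := structure_thm G
  obtain ⟨ι', hι', p', e', hp', he', ⟨eH⟩⟩ := structure_thm H
  have hrc : ∀ n : ℕ, n ≠ 0 →
      Nat.card {x : G // x ^ n = 1} = Nat.card {x : H // x ^ n = 1} := by
    intro n hn
    rw [rc_eq_sum G hn, rc_eq_sum H hn]
    exact Finset.sum_congr rfl fun t _ => h t
  have hprod : ∀ n : ℕ, n ≠ 0 →
      ∏ i, Nat.gcd n (p i ^ e i) = ∏ j, Nat.gcd n (p' j ^ e' j) := by
    intro n hn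
    have q1 : ∏ i, Nat.gcd n (p i ^ e i) = Nat.card {x : G // x ^ n = 1} := by
      rw [rc_congr eG n, rc_pi]
      exact Finset.prod_congr rfl fun i _ =>
        (rc_zmod _ (pow_ne_zero _ (hp i).ne_zero) hn).symm
    have q2 : ∏ j, Nat.gcd n (p' j ^ e' j) = Nat.card {x : H // x ^ n = 1} := by
      rw [rc_congr eH n, rc_pi]
      exact Finset.prod_congr rfl fun j _ =>
        (rc_zmod _ (pow_ne_zero _ (hp' j).ne_zero) hn).symm
    rw [q1, q2, hrc n hn]
  have hv := pairs_count_eq p e p' e' hp hp' he he' hprod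
  obtain ⟨σ, hσ⟩ := equiv_of_fibers (fun i => (p i, e i)) (fun j => (p' j, e' j)) hv
  have hq : ∀ i, p i ^ e i = p' (σ i) ^ e' (σ i) := by
    intro i
    have h2 := hσ i
    simp only [Prod.mk.injEq] at h2
    rw [h2.1, h2.2]
  have e1 : (∀ i : ι, Multiplicative (ZMod (p i ^ e i)))
      ≃* (∀ i : ι, Multiplicative (ZMod (p' (σ i) ^ e' (σ i)))) :=
    MulEquiv.piCongrRight fun i => castMulZMod (hq i)
  have e2 : (∀ i : ι, Multiplicative (ZMod (p' (σ i) ^ e' (σ i))))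
      ≃* (∀ j : ι', Multiplicative (ZMod (p' j ^ e' j))) :=
    (myPiCongrLeft' (fun j => Multiplicative (ZMod (p' j ^ e' j))) σ.symm).symm
  exact ⟨eG.trans (e1.trans (e2.trans eH.symm))⟩
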